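/- arXiv:1507.06077 — 2 statements merged into one kernel-verified Lean document; each statement's English description precedes it below -/
import Mathlib

section
/- Let $J$ be an infinite set and $\lambda,\chi\in\mathbb{R}^J$ satisfy the positive energy condition for $W(A_J)$ (infimum over finitely supported permutations $w$ of $\sum_j\lambda_j(d_{w(j)}-d_j)$ is finite). Let $m<n$ be reals and $r\in\mathbb{R}$. If the set $J_n^{>r}=\{j:\lambda_j=n,\ d_j>r\}$ is infinite, then for every $t<r$ the set $J_m^{<t}=\{j:\lambda_j=m,\ d_j<t\}$ is finite. -/
open scoped BigOperators

/-- A permutation of `J` is finitely supported if it fixes all but finitely many elements. -/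
def IsFinPerm {J : Type*} (w : Equiv.Perm J) : Prop := {j | w j ≠ j}.Finite

/-- A finitely supported sign function: takes values `±1` and equals `1` outside a finite set. -/
def IsSign {J : Type*} (σ : J → ℝ) : Prop :=
  (∀ j, σ j = 1 ∨ σ j = -1) ∧ {j | σ j ≠ 1}.Finite

/-- A finitely supported sign function whose support has even cardinality. -/
def IsEvenSign {J : Type*} (σ : J → ℝ) : Prop :=
  IsSign σ ∧ ∃ F : Finset J, (∀ j, σ j = -1 ↔ j ∈ F) ∧ Even F.card

/-- The energy `λ(w⁻¹.χ - χ) = ∑ⱼ λⱼ (d_{w(j)} - dⱼ)` (a finite sum for `w` finitely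
supported). -/
noncomputable def energyA {J : Type*} (lam d : J → ℝ) (w : Equiv.Perm J) : ℝ :=
  ∑ᶠ j, lam j * (d (w j) - d j)

/-- The energy `λ(σ w⁻¹.χ - χ) = ∑ⱼ λⱼ (σⱼ d_{w(j)} - dⱼ)`. -/
noncomputable def energyB {J : Type*} (lam d σ : J → ℝ) (w : Equiv.Perm J) : ℝ :=
  ∑ᶠ j, lam j * (σ j * d (w j) - d j)

/-- Positive energy condition for `W(A_J)`. -/
def PECA {J : Type*} (lam d : J → ℝ) : Prop :=
  ∃ C : ℝ, ∀ w : Equiv.Perm J, IsFinPerm w → C ≤ energyA lam d w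

/-- Positive energy condition for `W(B_J)`. -/
def PECB {J : Type*} (lam d : J → ℝ) : Prop :=
  ∃ C : ℝ, ∀ (σ : J → ℝ) (w : Equiv.Perm J), IsSign σ → IsFinPerm w → C ≤ energyB lam d σ w

/-- Positive energy condition for `W(D_J)`. -/
def PECD {J : Type*} (lam d : J → ℝ) : Prop :=
  ∃ C : ℝ, ∀ (σ : J → ℝ) (w : Equiv.Perm J), IsEvenSign σ → IsFinPerm w → C ≤ energyB lam d σ w

section aux
variable {J : Type*}

lemma energy_support_subset (lam d : J → ℝ) (w : Equiv.Perm J) :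
    Function.support (fun j => lam j * (d (w j) - d j)) ⊆ {j | w j ≠ j} := by
  intro j hj
  simp only [Function.mem_support] at hj
  intro hwj
  apply hj
  simp [hwj]

lemma energyA_trans (lam d : J → ℝ) (w v : Equiv.Perm J)
    (hw : IsFinPerm w) (hv : IsFinPerm v)
    (hdisj : Disjoint {j | w j ≠ j} {j | v j ≠ j}) :
    energyA lam d (w.trans v) = energyA lam d w + energyA lam d v := by
  have key : ∀ j, lam j * (d ((w.trans v) j) - d j) =
      lam j * (d (w j) - d j) + lam j * (d (v j) - d j) := by
    intro j
    simp only [Equiv.trans_apply]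
    by_cases hwj : w j = j
    · rw [hwj]; ring_nf
    · have hvj : v j = j := by
        by_contra hvj
        exact Set.disjoint_left.mp hdisj hwj hvj
      have hwwj : w (w j) ≠ w j := fun hc => hwj (w.injective hc)
      have hvwj : v (w j) = w j := by
        by_contra hc
        exact Set.disjoint_left.mp hdisj hwwj hc
      rw [hvwj, hvj]; ring_nf
  unfold energyA
  rw [show (fun j => lam j * (d ((w.trans v) j) - d j)) =
      (fun j => lam j * (d (w j) - d j)) + (fun j => lam j * (d (v j) - d j)) from
    funext fun j => key j]
  exact finsum_add_distrib (hw.subset (energy_support_subset lam d w))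
    (hv.subset (energy_support_subset lam d v))

lemma isFinPerm_swap [DecidableEq J] (a b : J) : IsFinPerm (Equiv.swap a b) := by
  apply Set.Finite.subset ((Set.finite_singleton b).insert a)
  intro j hj
  simp only [Set.mem_setOf_eq] at hj
  by_contra hc
  simp only [Set.mem_insert_iff, Set.mem_singleton_iff, not_or] at hc
  exact hj (Equiv.swap_apply_of_ne_of_ne hc.1 hc.2)

lemma energyA_swap [DecidableEq J] (lam d : J → ℝ) (a b : J) (hab : a ≠ b) :
    energyA lam d (Equiv.swap a b) = (lam a - lam b) * (d b - d a) := by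
  unfold energyA
  have hsub : Function.support (fun j => lam j * (d (Equiv.swap a b j) - d j)) ⊆
      ({a, b} : Finset J) := by
    intro j hj
    have := energy_support_subset lam d (Equiv.swap a b) hj
    simp only [Set.mem_setOf_eq] at this
    by_contra hc
    simp only [Finset.coe_insert, Finset.coe_singleton, Set.mem_insert_iff,
      Set.mem_singleton_iff, not_or] at hc
    exact this (Equiv.swap_apply_of_ne_of_ne hc.1 hc.2)
  rw [finsum_eq_finset_sum_of_support_subset _ hsub]
  rw [Finset.sum_pair hab]
  simp [Equiv.swap_apply_left, Equiv.swap_apply_right]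
  ring

end aux


theorem pecA_infinite_finite (J : Type*) [Infinite J] (lam d : J → ℝ)
    (hpec : PECA lam d) (m n r : ℝ) (hmn : m < n)
    (h : {j | lam j = n ∧ r < d j}.Infinite) :
    ∀ t < r, {j | lam j = m ∧ d j < t}.Finite := by
  classical
  intro t ht
  by_contra hB
  have hBinf : {j | lam j = m ∧ d j < t}.Infinite := hB
  obtain ⟨C, hC⟩ := hpec
  set c : ℝ := (n - m) * (r - t) with hc
  have hcpos : 0 < c := mul_pos (by linarith) (by linarith)
  -- build, for each k, a finitely supported perm with energy ≤ -k·c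
  have main : ∀ k : ℕ, ∃ w : Equiv.Perm J, IsFinPerm w ∧
      energyA lam d w ≤ -(k : ℝ) * c := by
    intro k
    induction k with
    | zero =>
      refine ⟨Equiv.refl J, ?_, ?_⟩
      · simpa [IsFinPerm] using Set.finite_empty
      · simp [energyA]
    | succ k ih =>
      obtain ⟨w, hwfin, hwE⟩ := ih
      obtain ⟨a, ha, hanot⟩ := h.exists_notMem_finset hwfin.toFinset
      obtain ⟨b, hb, hbnot⟩ := hBinf.exists_notMem_finset (insert a hwfin.toFinset)
      simp only [Set.mem_setOf_eq] at ha hb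
      have hab : a ≠ b := fun hc' => by
        rw [hc'] at ha; linarith [ha.1, hb.1]
      have hbnot' : b ∉ hwfin.toFinset := fun hc' => hbnot (Finset.mem_insert_of_mem hc')
      have hba : b ≠ a := hab.symm
      have hdisj : Disjoint {j | w j ≠ j} {j | Equiv.swap a b j ≠ j} := by
        rw [Set.disjoint_left]
        intro j hj hjs
        have hj' : j ∈ hwfin.toFinset := (Set.Finite.mem_toFinset hwfin).mpr hj
        have : j = a ∨ j = b := by
          by_contra hc'
          push_neg at hc'
          exact hjs (Equiv.swap_apply_of_ne_of_ne hc'.1 hc'.2)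
        rcases this with rfl | rfl
        · exact hanot hj'
        · exact hbnot' hj'
      refine ⟨w.trans (Equiv.swap a b), ?_, ?_⟩
      · apply Set.Finite.subset (hwfin.union (isFinPerm_swap a b))
        intro j hj
        simp only [Set.mem_setOf_eq, Equiv.trans_apply] at hj
        by_contra hc'
        simp only [Set.mem_union, Set.mem_setOf_eq, not_or, not_not] at hc'
        rw [hc'.1, hc'.2] at hj
        exact hj rfl
      · rw [energyA_trans lam d w (Equiv.swap a b) hwfin (isFinPerm_swap a b) hdisj,
          energyA_swap lam d a b hab]
        have hswap : (lam a - lam b) * (d b - d a) ≤ -c := by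
          rw [ha.1, hb.1, hc]
          nlinarith [ha.2, hb.2]
        push_cast
        linarith
  obtain ⟨k, hk⟩ := exists_nat_gt ((-C) / c)
  obtain ⟨w, hwfin, hwE⟩ := main k
  have := hC w hwfin
  have : -C / c < (k : ℝ) := hk
  have hkc : -C < k * c := by
    rw [div_lt_iff₀ hcpos] at this; linarith
  linarith [hC w hwfin]
end

section
/- Let $J$ be an infinite set and $\lambda=(\lambda_j),\chi=(d_j)\in\mathbb{R}^J$ satisfy the positive energy condition for $W(D_J)$. If $m,n$ are in the range of $\lambda$ with $|m|<|n|$, then $\{d_j: \lambda_j=m\}$ is bounded. -/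
open scoped BigOperators

lemma energyB_swap {J : Type*} [DecidableEq J] (lam d σ : J → ℝ) (j j0 : J)
    (hjj0 : j ≠ j0) (hσ : ∀ k, k ≠ j → k ≠ j0 → σ k = 1) :
    energyB lam d σ (Equiv.swap j j0) =
      lam j * (σ j * d j0 - d j) + lam j0 * (σ j0 * d j - d j0) := by
  have hsub : (Function.support fun k => lam k * (σ k * d (Equiv.swap j j0 k) - d k))
      ⊆ ({j, j0} : Finset J) := by
    intro k hk
    by_contra hkm
    simp only [Finset.coe_insert, Finset.coe_singleton, Set.mem_insert_iff,
      Set.mem_singleton_iff, not_or] at hkm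
    obtain ⟨h1, h2⟩ := hkm
    have : Equiv.swap j j0 k = k := Equiv.swap_apply_of_ne_of_ne h1 h2
    simp [Function.mem_support, this, hσ k h1 h2] at hk
  rw [energyB, finsum_eq_sum_of_support_subset _ hsub, Finset.sum_pair hjj0,
    Equiv.swap_apply_left, Equiv.swap_apply_right]

lemma isFinPerm_swap_s11 {J : Type*} [DecidableEq J] (j j0 : J) :
    IsFinPerm (Equiv.swap j j0) := by
  apply Set.Finite.subset ((Set.finite_singleton j0).insert j)
  intro k hk
  simp only [Set.mem_setOf_eq] at hk
  by_contra hkm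
  simp only [Set.mem_insert_iff, Set.mem_singleton_iff, not_or] at hkm
  exact hk (Equiv.swap_apply_of_ne_of_ne hkm.1 hkm.2)

theorem pecD_bounded (J : Type*) [Infinite J] (lam d : J → ℝ)
    (hpec : PECD lam d) (m n : ℝ) (hm : m ∈ Set.range lam) (hn : n ∈ Set.range lam)
    (hmn : |m| < |n|) :
    BddBelow (d '' {j | lam j = m}) ∧ BddAbove (d '' {j | lam j = m}) := by
  classical
  obtain ⟨C, hC⟩ := hpec
  obtain ⟨j0, hj0⟩ := hn
  -- key inequalities for any j with lam j = m
  have key : ∀ x ∈ d '' {j | lam j = m},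
      C ≤ (n - m) * (x - d j0) ∧ C ≤ -(m + n) * (x + d j0) := by
    rintro x ⟨j, hj, rfl⟩
    simp only [Set.mem_setOf_eq] at hj
    have hjne : j ≠ j0 := by
      rintro rfl
      rw [hj0] at hj
      rw [hj] at hmn
      exact lt_irrefl _ hmn
    constructor
    · have h1 := hC (fun _ => (1:ℝ)) (Equiv.swap j j0)
        ⟨⟨fun _ => Or.inl rfl, by simp⟩, ⟨∅, by norm_num, Even.zero⟩⟩
        (isFinPerm_swap_s11 j j0)
      rw [energyB_swap lam d _ j j0 hjne (fun _ _ _ => rfl)] at h1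
      rw [hj, hj0] at h1
      nlinarith [h1]
    · set σ : J → ℝ := fun k => if k = j ∨ k = j0 then -1 else 1 with hσdef
      have hσj : σ j = -1 := by simp [hσdef]
      have hσj0 : σ j0 = -1 := by simp [hσdef]
      have hsign : IsEvenSign σ := by
        refine ⟨⟨fun k => ?_, ?_⟩, ⟨{j, j0}, fun k => ?_, ?_⟩⟩
        · by_cases h : k = j ∨ k = j0 <;> simp [hσdef, h]
        · apply Set.Finite.subset ((Set.finite_singleton j0).insert j)
          intro k hk
          by_contra hkm
          simp only [Set.mem_insert_iff, Set.mem_singleton_iff, not_or] at hkm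
          exact hk (by simp [hσdef, hkm.1, hkm.2])
        · constructor
          · intro h
            by_contra hkm
            simp only [Finset.mem_insert, Finset.mem_singleton, not_or] at hkm
            rw [hσdef] at h
            simp only [hkm.1, hkm.2, or_self, if_false] at h
            norm_num at h
          · intro h
            simp only [Finset.mem_insert, Finset.mem_singleton] at h
            simp [hσdef, h]
        · rw [Finset.card_pair hjne]
          exact even_two
      have h2 := hC σ (Equiv.swap j j0) hsign (isFinPerm_swap_s11 j j0)
      rw [energyB_swap lam d σ j j0 hjne
        (fun k h1 h2 => by simp [hσdef, h1, h2])] at h2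
      rw [hj, hj0, hσj, hσj0] at h2
      nlinarith [h2]
  have hn0 : n ≠ 0 := by
    intro h; rw [h, abs_zero] at hmn; exact absurd hmn (not_lt.mpr (abs_nonneg m))
  have hnm : m < |n| := lt_of_le_of_lt (le_abs_self m) hmn
  have hnm' : -|n| < m := neg_lt_of_abs_lt hmn
  rcases lt_or_gt_of_ne hn0 with hneg | hpos
  · -- n < 0 : |n| = -n, so n - m < 0 and n + m < 0
    have h1 : n - m < 0 := by rw [abs_of_neg hneg] at hnm'; linarith
    have h2 : n + m < 0 := by rw [abs_of_neg hneg] at hnm; linarith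
    constructor
    · refine ⟨C / (-(m + n)) - d j0, fun x hx => ?_⟩
      have hk := (key x hx).2
      have : C / (-(m + n)) ≤ x + d j0 := by
        rw [div_le_iff₀ (by linarith : (0:ℝ) < -(m + n))]
        nlinarith
      linarith
    · refine ⟨C / (n - m) + d j0, fun x hx => ?_⟩
      have := (key x hx).1
      have : x - d j0 ≤ C / (n - m) := by
        rw [le_div_iff_of_neg (by linarith : (n - m) < 0)]
        nlinarith
      linarith
  · -- n > 0 : n - m > 0 and n + m > 0
    have h1 : 0 < n - m := by rw [abs_of_pos hpos] at hnm; linarith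
    have h2 : 0 < n + m := by rw [abs_of_pos hpos] at hnm'; linarith
    constructor
    · refine ⟨C / (n - m) + d j0, fun x hx => ?_⟩
      have := (key x hx).1
      have : C / (n - m) ≤ x - d j0 := by
        rw [div_le_iff₀ h1]; nlinarith
      linarith
    · refine ⟨-(C / (m + n)) - d j0, fun x hx => ?_⟩
      have := (key x hx).2
      have : C / (m + n) ≤ -(x + d j0) := by
        rw [div_le_iff₀ (by linarith : (0:ℝ) < m + n)]; nlinarith
      linarith
end
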